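/- Let 𝒳 be a finite set with |𝒳| = d ≥ 1, let P be a probability mass function on 𝒳, let ℓ ≥ 1, and let X₁, …, X_ℓ be independent random variables each distributed according to P, with empirical distribution P̂(x) := (1/ℓ)·#{j ≤ ℓ : X_j = x}. Then for every δ ∈ (0,1), the probability that ∑_{x ∈ 𝒳} |P(x) − P̂(x)| > √(2(d + log(1/δ))/ℓ) is at most δ. -/

import Mathlib

open Real

/-- Hoeffding's lemma kernel for a two-point distribution. -/
lemma hoeffding_kernel {p : ℝ} (hp0 : 0 ≤ p) (hp1 : p ≤ 1) (t : ℝ) :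
    p * exp (t * (1 - p)) + (1 - p) * exp (-(t * p)) ≤ exp (t ^ 2 / 8) := by
  rcases eq_or_lt_of_le hp0 with h0 | h0
  · simp only [← h0, zero_mul, sub_zero, one_mul, mul_zero, neg_zero, exp_zero, zero_add]
    exact Real.one_le_exp (by positivity)
  rcases eq_or_lt_of_le hp1 with h1 | h1
  · simp only [h1, one_mul, sub_self, mul_one, zero_mul, add_zero, mul_zero, exp_zero]
    exact Real.one_le_exp (by positivity)
  set q := 1 - p with hq
  have hq0 : 0 < q := by simp [hq]; linarith
  -- positivity of the denominator
  have hden : ∀ s : ℝ, 0 < p * exp s + q := fun s => by positivity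
  -- define g and its derivatives
  set g : ℝ → ℝ := fun s => s ^ 2 / 8 + p * s - Real.log (p * exp s + q) with hg
  set g' : ℝ → ℝ := fun s => s / 4 + p - p * exp s / (p * exp s + q) with hg'
  have hder : ∀ s, HasDerivAt g (g' s) s := by
    intro s
    have h1 : HasDerivAt (fun s : ℝ => p * exp s + q) (p * exp s) s := by
      simpa using (((Real.hasDerivAt_exp s).const_mul p).add_const q)
    have h2 : HasDerivAt (fun s : ℝ => Real.log (p * exp s + q))
        (p * exp s / (p * exp s + q)) s := h1.log (hden s).ne'
    have h3 : HasDerivAt (fun s : ℝ => s ^ 2 / 8 + p * s) (s / 4 + p) s := by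
      have := ((hasDerivAt_pow 2 s).div_const 8).add ((hasDerivAt_id s).const_mul p)
      exact this.congr_deriv (by norm_num; ring)
    exact h3.sub h2
  have hder' : ∀ s, HasDerivAt g' (1 / 4 - p * q * exp s / (p * exp s + q) ^ 2) s := by
    intro s
    have h1 : HasDerivAt (fun s : ℝ => p * exp s + q) (p * exp s) s := by
      simpa using (((Real.hasDerivAt_exp s).const_mul p).add_const q)
    have h2 : HasDerivAt (fun s : ℝ => p * exp s) (p * exp s) s :=
      (Real.hasDerivAt_exp s).const_mul p
    have h3 : HasDerivAt (fun s : ℝ => p * exp s / (p * exp s + q))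
        ((p * exp s * (p * exp s + q) - p * exp s * (p * exp s)) / (p * exp s + q) ^ 2) s :=
      h2.div h1 (hden s).ne'
    have h4 : HasDerivAt (fun s : ℝ => s / 4 + p) (1 / 4) s := by
      simpa using ((hasDerivAt_id s).div_const 4).add_const p
    have := h4.sub h3
    exact this.congr_deriv (by field_simp; ring)
  -- second derivative nonneg
  have hsec : ∀ s, 0 ≤ 1 / 4 - p * q * exp s / (p * exp s + q) ^ 2 := by
    intro s
    rw [sub_nonneg, div_le_div_iff₀ (by positivity) (by norm_num : (0:ℝ) < 4)]
    nlinarith [sq_nonneg (p * exp s - q), exp_pos s]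
  -- g' is monotone
  have hmono : Monotone g' :=
    monotone_of_deriv_nonneg (fun s => (hder' s).differentiableAt)
      (fun s => by rw [(hder' s).deriv]; exact hsec s)
  have hg'0 : g' 0 = 0 := by
    simp only [hg', Real.exp_zero, mul_one]
    rw [show p + q = 1 by rw [hq]; ring]
    simp
  -- g s ≥ 0 for all s : split on sign
  have hg0 : g 0 = 0 := by simp [hg, hq]
  have key : ∀ s : ℝ, 0 ≤ g s := by
    intro s
    rcases le_total 0 s with hs | hs
    · have : MonotoneOn g (Set.Ici (0:ℝ)) := by
        apply monotoneOn_of_deriv_nonneg (convex_Ici 0)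
          (Continuous.continuousOn (by
            fun_prop (disch := intro x; exact (hden x).ne')))
          (fun x _ => (hder x).differentiableAt.differentiableWithinAt)
        intro x hx
        rw [(hder x).deriv]
        have : (0:ℝ) ≤ x := le_of_lt (by simpa using hx)
        calc (0:ℝ) = g' 0 := hg'0.symm
          _ ≤ g' x := hmono this
      have := this (Set.self_mem_Ici) (Set.mem_Ici.2 hs) hs
      rwa [hg0] at this
    · have : AntitoneOn g (Set.Iic (0:ℝ)) := by
        apply antitoneOn_of_deriv_nonpos (convex_Iic 0)
          (Continuous.continuousOn (by
            fun_prop (disch := intro x; exact (hden x).ne')))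
          (fun x _ => (hder x).differentiableAt.differentiableWithinAt)
        intro x hx
        rw [(hder x).deriv]
        have hx0 : x ≤ (0:ℝ) := le_of_lt (by simpa using hx)
        calc g' x ≤ g' 0 := hmono hx0
          _ = 0 := hg'0
      have := this (Set.mem_Iic.2 hs) (Set.self_mem_Iic) hs
      rwa [hg0] at this
  -- conclude
  have hgt := key t
  have : p * exp (t * (1 - p)) + (1 - p) * exp (-(t * p))
      = exp (-(p * t)) * (p * exp t + q) := by
    have e1 : exp (t * (1 - p)) = exp (-(p * t)) * exp t := by
      rw [← Real.exp_add]; ring_nf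
    have e2 : exp (-(t * p)) = exp (-(p * t)) := by ring_nf
    rw [e1, e2, hq]; ring
  rw [this, ← Real.exp_log (hden t), ← exp_add]
  apply exp_le_exp.2
  have := key t
  simp only [hg] at this
  linarith

open MeasureTheory ProbabilityTheory

/-- Expectation of a function of a finitely-valued random variable. -/
lemma integral_comp_fintype {Ω : Type*} [MeasureSpace Ω] [IsProbabilityMeasure (ℙ : Measure Ω)]
    {𝒳 : Type*} [Fintype 𝒳] [MeasurableSpace 𝒳] [MeasurableSingletonClass 𝒳]
    (P : 𝒳 → ℝ) (Y : Ω → 𝒳) (hY : Measurable Y)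
    (hdist : ∀ x, (ℙ {ω | Y ω = x}).toReal = P x) (f : 𝒳 → ℝ) :
    ∫ ω, f (Y ω) ∂ℙ = ∑ x, P x * f x := by
  have hmap : IsProbabilityMeasure (Measure.map Y ℙ) := Measure.isProbabilityMeasure_map hY.aemeasurable
  rw [← integral_map hY.aemeasurable (measurable_of_countable f).aestronglyMeasurable]
  rw [integral_fintype Integrable.of_finite]
  refine Finset.sum_congr rfl fun x _ => ?_
  rw [measureReal_def, Measure.map_apply hY (measurableSet_singleton x)]
  have : Y ⁻¹' {x} = {ω | Y ω = x} := rfl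
  rw [this, hdist x, smul_eq_mul]

/-- mgf bound for one sample. -/
lemma step_mgf {Ω : Type*} [MeasureSpace Ω] [IsProbabilityMeasure (ℙ : Measure Ω)]
    {𝒳 : Type*} [Fintype 𝒳] [DecidableEq 𝒳] [MeasurableSpace 𝒳] [MeasurableSingletonClass 𝒳]
    (P : 𝒳 → ℝ) (hP0 : ∀ x, 0 ≤ P x) (hP1 : ∑ x, P x = 1)
    (Y : Ω → 𝒳) (hY : Measurable Y)
    (hdist : ∀ x, (ℙ {ω | Y ω = x}).toReal = P x)
    (c : 𝒳 → ℝ) (hc : ∀ x, c x = 1 ∨ c x = -1) (lam : ℝ) :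
    ∫ ω, exp (lam * (c (Y ω) - ∑ x, P x * c x)) ∂ℙ ≤ exp (lam ^ 2 / 2) := by
  set m : ℝ := ∑ x, P x * c x with hm
  rw [integral_comp_fintype P Y hY hdist (fun x => exp (lam * (c x - m)))]
  set A : Finset 𝒳 := Finset.univ.filter (fun x => c x = 1) with hA
  set p : ℝ := ∑ x ∈ A, P x with hp
  have hcA : ∀ x ∈ A, c x = 1 := fun x hx => (Finset.mem_filter.1 hx).2
  have hcA' : ∀ x ∈ Finset.univ.filter (fun x => ¬ c x = 1), c x = -1 := by
    intro x hx
    rcases hc x with h | h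
    · exact absurd h (Finset.mem_filter.1 hx).2
    · exact h
  have hsplit : ∀ f : 𝒳 → ℝ, ∑ x, f x = ∑ x ∈ A, f x + ∑ x ∈ Finset.univ.filter (fun x => ¬ c x = 1), f x := by
    intro f
    rw [hA, Finset.sum_filter_add_sum_filter_not]
  have hq : ∑ x ∈ Finset.univ.filter (fun x => ¬ c x = 1), P x = 1 - p := by
    have := hsplit P
    rw [hP1] at this
    linarith
  have hp0 : 0 ≤ p := Finset.sum_nonneg fun x _ => hP0 x
  have hp1 : p ≤ 1 := by
    have h2 : 0 ≤ ∑ x ∈ Finset.univ.filter (fun x => ¬ c x = 1), P x :=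
      Finset.sum_nonneg fun x _ => hP0 x
    rw [hq] at h2; linarith
  have hmval : m = 2 * p - 1 := by
    have s1 : ∑ x ∈ A, P x * c x = ∑ x ∈ A, P x :=
      Finset.sum_congr rfl fun x hx => by rw [hcA x hx, mul_one]
    have s2 : ∑ x ∈ Finset.univ.filter (fun x => ¬ c x = 1), P x * c x
        = -∑ x ∈ Finset.univ.filter (fun x => ¬ c x = 1), P x := by
      rw [← Finset.sum_neg_distrib]
      exact Finset.sum_congr rfl fun x hx => by rw [hcA' x hx]; ring
    rw [hm, hsplit (fun x => P x * c x), s1, s2, hq]; ring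
  have hsum : ∑ x, P x * exp (lam * (c x - m))
      = p * exp (lam * (1 - m)) + (1 - p) * exp (lam * (-1 - m)) := by
    have s1 : ∑ x ∈ A, P x * exp (lam * (c x - m)) = p * exp (lam * (1 - m)) := by
      rw [hp, Finset.sum_mul]
      exact Finset.sum_congr rfl fun x hx => by rw [hcA x hx]
    have s2 : ∑ x ∈ Finset.univ.filter (fun x => ¬ c x = 1), P x * exp (lam * (c x - m))
        = (1 - p) * exp (lam * (-1 - m)) := by
      rw [← hq, Finset.sum_mul]
      exact Finset.sum_congr rfl fun x hx => by rw [hcA' x hx]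
    rw [hsplit (fun x => P x * exp (lam * (c x - m))), s1, s2]
  rw [hsum, hmval]
  have e1 : lam * (1 - (2 * p - 1)) = (2 * lam) * (1 - p) := by ring
  have e2 : lam * (-1 - (2 * p - 1)) = -((2 * lam) * p) := by ring
  rw [e1, e2]
  calc p * exp (2 * lam * (1 - p)) + (1 - p) * exp (-(2 * lam * p))
      ≤ exp ((2 * lam) ^ 2 / 8) := hoeffding_kernel hp0 hp1 (2 * lam)
    _ = exp (lam ^ 2 / 2) := by ring_nf

/-- Chernoff bound for one sign pattern. -/
lemma chernoff_sign {Ω : Type*} [MeasureSpace Ω] [IsProbabilityMeasure (ℙ : Measure Ω)]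
    {𝒳 : Type*} [Fintype 𝒳] [DecidableEq 𝒳] [MeasurableSpace 𝒳] [MeasurableSingletonClass 𝒳]
    (P : 𝒳 → ℝ) (hP0 : ∀ x, 0 ≤ P x) (hP1 : ∑ x, P x = 1)
    (ℓ : ℕ) (X : Fin ℓ → Ω → 𝒳) (hmeas : ∀ j, Measurable (X j))
    (hindep : iIndepFun X ℙ)
    (hdist : ∀ j x, (ℙ {ω | X j ω = x}).toReal = P x)
    (c : 𝒳 → ℝ) (hc : ∀ x, c x = 1 ∨ c x = -1) (ε : ℝ) (hε : 0 ≤ ε) :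
    (ℙ {ω | (ℓ : ℝ) * ε ≤ ∑ j, (c (X j ω) - ∑ x, P x * c x)}).toReal
      ≤ exp (-((ℓ : ℝ) * ε ^ 2 / 2)) := by
  set m : ℝ := ∑ x, P x * c x with hm
  set Y : Fin ℓ → Ω → ℝ := fun j => (fun x => c x - m) ∘ X j with hY
  have hYmeas : ∀ j, Measurable (Y j) := fun j => (measurable_of_countable _).comp (hmeas j)
  have hYindep : iIndepFun Y ℙ :=
    hindep.comp (fun _ => fun x => c x - m) (fun _ => measurable_of_countable _)
  have h_int : ∀ j, Integrable (fun ω => exp (ε * Y j ω)) ℙ := by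
    intro j
    refine (integrable_const (exp (ε * 2))).mono'
      ((Real.measurable_exp.comp ((hYmeas j).const_mul ε)).aestronglyMeasurable)
      (Filter.Eventually.of_forall fun ω => ?_)
    rw [Real.norm_eq_abs, abs_exp, Real.exp_le_exp]
    have hc1 : |c (X j ω)| ≤ 1 := by rcases hc (X j ω) with h | h <;> rw [h] <;> norm_num
    have hm1 : |m| ≤ 1 := by
      rw [hm]
      calc |∑ x, P x * c x| ≤ ∑ x, |P x * c x| := Finset.abs_sum_le_sum_abs _ _
        _ ≤ ∑ x, P x := Finset.sum_le_sum fun x _ => by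
            rw [abs_mul, abs_of_nonneg (hP0 x)]
            calc P x * |c x| ≤ P x * 1 := by
                  rcases hc x with h | h <;> rw [h] <;> norm_num
              _ = P x := mul_one _
        _ = 1 := hP1
    have : |Y j ω| ≤ 2 := by
      simp only [hY, Function.comp_apply]
      calc |c (X j ω) - m| ≤ |c (X j ω)| + |m| := abs_sub _ _
        _ ≤ 2 := by linarith
    calc ε * Y j ω ≤ |ε * Y j ω| := le_abs_self _
      _ = ε * |Y j ω| := by rw [abs_mul, abs_of_nonneg hε]
      _ ≤ ε * 2 := by nlinarith
  have h_int_sum : Integrable (fun ω => exp (ε * (∑ j, Y j) ω)) ℙ :=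
    hYindep.integrable_exp_mul_sum hYmeas (fun j _ => h_int j)
  have hevent : {ω | (ℓ : ℝ) * ε ≤ ∑ j, (c (X j ω) - m)}
      = {ω | (ℓ : ℝ) * ε ≤ (∑ j, Y j) ω} := by
    ext ω; simp [hY]
  rw [hevent]
  calc (ℙ {ω | (ℓ : ℝ) * ε ≤ (∑ j, Y j) ω}).toReal
      ≤ exp (-ε * ((ℓ : ℝ) * ε)) * mgf (∑ j, Y j) ℙ ε :=
        measure_ge_le_exp_mul_mgf ((ℓ : ℝ) * ε) hε h_int_sum
    _ ≤ exp (-ε * ((ℓ : ℝ) * ε)) * exp (ε ^ 2 / 2) ^ ℓ := by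
        refine mul_le_mul_of_nonneg_left ?_ (exp_nonneg _)
        rw [hYindep.mgf_sum hYmeas Finset.univ]
        calc ∏ j, mgf (Y j) ℙ ε ≤ ∏ _j : Fin ℓ, exp (ε ^ 2 / 2) := by
              refine Finset.prod_le_prod (fun j _ => mgf_nonneg) (fun j _ => ?_)
              have := step_mgf P hP0 hP1 (X j) (hmeas j) (hdist j) c hc ε
              simpa [mgf, hY] using this
          _ = exp (ε ^ 2 / 2) ^ ℓ := by
              rw [Finset.prod_const, Finset.card_univ, Fintype.card_fin]
    _ = exp (-((ℓ : ℝ) * ε ^ 2 / 2)) := by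
        rw [← Real.exp_nat_mul, ← Real.exp_add]
        congr 1
        ring


/-- High-probability form of the L1-deviation bound: if `X₁, …, X_ℓ` are
i.i.d. samples from a probability mass function `P` on a finite set of
cardinality `d ≥ 1`, and `P̂` is the empirical distribution, then for every
`δ ∈ (0,1)`, `ℙ(‖P − P̂‖₁ > √(2(d + log(1/δ))/ℓ)) ≤ δ`. -/
theorem l1_deviation_high_probability
    {Ω : Type*} [MeasureSpace Ω] [IsProbabilityMeasure (ℙ : Measure Ω)]
    {𝒳 : Type*} [Fintype 𝒳] [DecidableEq 𝒳] [MeasurableSpace 𝒳]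
    [MeasurableSingletonClass 𝒳]
    (d : ℕ) (hd : 1 ≤ d) (hcard : Fintype.card 𝒳 = d)
    (P : 𝒳 → ℝ) (hP0 : ∀ x, 0 ≤ P x) (hP1 : ∑ x, P x = 1)
    (ℓ : ℕ) (hℓ : 1 ≤ ℓ) (X : Fin ℓ → Ω → 𝒳)
    (hmeas : ∀ j, Measurable (X j))
    (hindep : iIndepFun X ℙ)
    (hdist : ∀ j x, (ℙ {ω | X j ω = x}).toReal = P x)
    (δ : ℝ) (hδ0 : 0 < δ) (hδ1 : δ < 1) :
    (ℙ {ω | Real.sqrt (2 * ((d : ℝ) + Real.log (1 / δ)) / (ℓ : ℝ))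
        < ∑ x, |P x -
          ((Finset.univ.filter (fun j => X j ω = x)).card : ℝ) / (ℓ : ℝ)|}).toReal
      ≤ δ := by
  set L : ℝ := Real.log (1 / δ) with hLdef
  have hL : 0 ≤ L := Real.log_nonneg (one_le_one_div hδ0 hδ1.le)
  have hℓpos : (0 : ℝ) < (ℓ : ℝ) := by exact_mod_cast hℓ
  set ε : ℝ := Real.sqrt (2 * ((d : ℝ) + L) / (ℓ : ℝ)) with hεdef
  have hε0 : 0 ≤ ε := Real.sqrt_nonneg _
  have hε2 : ε ^ 2 = 2 * ((d : ℝ) + L) / (ℓ : ℝ) := by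
    rw [hεdef, Real.sq_sqrt (by positivity)]
  -- sign functions indexed by boolean patterns
  set c : (𝒳 → Bool) → 𝒳 → ℝ := fun b x => if b x then 1 else -1 with hcdef
  have hc : ∀ b x, c b x = 1 ∨ c b x = -1 := by
    intro b x; by_cases h : b x <;> simp [hcdef, h]
  set A : (𝒳 → Bool) → Set Ω :=
    fun b => {ω | (ℓ : ℝ) * ε ≤ ∑ j, (c b (X j ω) - ∑ x, P x * c b x)} with hAdef
  -- inclusion in the union
  have hsub : {ω | ε < ∑ x, |P x -
        ((Finset.univ.filter (fun j => X j ω = x)).card : ℝ) / (ℓ : ℝ)|} ⊆ ⋃ b, A b := by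
    intro ω hω
    simp only [Set.mem_setOf_eq] at hω
    set cnt : 𝒳 → ℝ := fun x => ((Finset.univ.filter (fun j => X j ω = x)).card : ℝ) with hcnt
    set b : 𝒳 → Bool := fun x => decide (P x ≤ cnt x / (ℓ : ℝ)) with hbdef
    refine Set.mem_iUnion.2 ⟨b, ?_⟩
    have habs : ∀ x, c b x * (cnt x / (ℓ : ℝ) - P x) = |P x - cnt x / (ℓ : ℝ)| := by
      intro x
      by_cases h : P x ≤ cnt x / (ℓ : ℝ)
      · rw [abs_of_nonpos (by linarith)]
        simp [hcdef, hbdef, h]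
      · have hb : b x = false := by simp [hbdef, h]
        rw [abs_of_pos (by linarith)]
        simp only [hcdef, hb, Bool.false_eq_true, if_false]
        ring
    -- sum over samples equals fiberwise sum
    have hfib : ∑ j, c b (X j ω) = ∑ x, cnt x * c b x := by
      rw [← Finset.sum_fiberwise' Finset.univ (fun j => X j ω) (c b)]
      refine Finset.sum_congr rfl fun x _ => ?_
      rw [Finset.sum_const, nsmul_eq_mul, hcnt]
    have hsum : ∑ j, (c b (X j ω) - ∑ x, P x * c b x)
        = ∑ x, cnt x * c b x - (ℓ : ℝ) * ∑ x, P x * c b x := by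
      rw [Finset.sum_sub_distrib, hfib, Finset.sum_const, Finset.card_univ, Fintype.card_fin,
        nsmul_eq_mul]
    have key : ε < ∑ x, c b x * (cnt x / (ℓ : ℝ) - P x) := by
      calc ε < ∑ x, |P x - cnt x / (ℓ : ℝ)| := hω
        _ = ∑ x, c b x * (cnt x / (ℓ : ℝ) - P x) :=
          Finset.sum_congr rfl fun x _ => (habs x).symm
    have expand : ∑ x, c b x * (cnt x / (ℓ : ℝ) - P x)
        = (∑ x, cnt x * c b x) / (ℓ : ℝ) - ∑ x, P x * c b x := by
      rw [Finset.sum_div, ← Finset.sum_sub_distrib]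
      refine Finset.sum_congr rfl fun x _ => ?_
      field_simp
    rw [expand] at key
    show (ℓ : ℝ) * ε ≤ ∑ j, (c b (X j ω) - ∑ x, P x * c b x)
    rw [hsum]
    have := mul_lt_mul_of_pos_left key hℓpos
    calc (ℓ : ℝ) * ε ≤ (ℓ : ℝ) * ((∑ x, cnt x * c b x) / (ℓ : ℝ) - ∑ x, P x * c b x) :=
          this.le
      _ = ∑ x, cnt x * c b x - (ℓ : ℝ) * ∑ x, P x * c b x := by
          field_simp
  -- union bound
  have hmeasb : ∀ b, (ℙ (A b)).toReal ≤ exp (-((ℓ : ℝ) * ε ^ 2 / 2)) := fun b =>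
    chernoff_sign P hP0 hP1 ℓ X hmeas hindep hdist (c b) (hc b) ε hε0
  have hsumne : (∑ b : 𝒳 → Bool, ℙ (A b)) ≠ ⊤ :=
    (ENNReal.sum_lt_top.2 fun b _ => measure_lt_top _ _).ne
  have hub : (ℙ {ω | ε < ∑ x, |P x -
        ((Finset.univ.filter (fun j => X j ω = x)).card : ℝ) / (ℓ : ℝ)|}).toReal
      ≤ ∑ b : 𝒳 → Bool, (ℙ (A b)).toReal := by
    rw [← ENNReal.toReal_sum fun b _ => measure_ne_top _ _]
    exact ENNReal.toReal_mono hsumne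
      ((measure_mono hsub).trans (measure_iUnion_fintype_le _ _))
  have hexp : (ℓ : ℝ) * ε ^ 2 / 2 = (d : ℝ) + L := by
    rw [hε2]; field_simp
  have hcardfun : (Fintype.card (𝒳 → Bool) : ℝ) = 2 ^ d := by
    rw [Fintype.card_fun, hcard, Fintype.card_bool]
    push_cast
    ring
  have h2e : (2 : ℝ) ≤ Real.exp 1 := by
    have := Real.exp_one_gt_d9
    linarith
  calc (ℙ _).toReal ≤ ∑ b : 𝒳 → Bool, (ℙ (A b)).toReal := hub
    _ ≤ ∑ _b : 𝒳 → Bool, exp (-((ℓ : ℝ) * ε ^ 2 / 2)) :=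
        Finset.sum_le_sum fun b _ => hmeasb b
    _ = (2 : ℝ) ^ d * exp (-((d : ℝ) + L)) := by
        rw [Finset.sum_const, Finset.card_univ, nsmul_eq_mul, hcardfun, hexp]
    _ = ((2 : ℝ) ^ d * exp (-(d : ℝ))) * δ := by
        rw [neg_add, Real.exp_add]
        have : exp (-L) = δ := by
          rw [hLdef, one_div, Real.log_inv, neg_neg, Real.exp_log hδ0]
        rw [this]; ring
    _ ≤ 1 * δ := by
        refine mul_le_mul_of_nonneg_right ?_ hδ0.le
        have h2d : (2 : ℝ) ^ d ≤ Real.exp 1 ^ d := pow_le_pow_left₀ (by norm_num) h2e d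
        rw [Real.exp_neg, mul_inv_le_iff₀ (by positivity), one_mul, ← Real.exp_one_pow]
        exact h2d
    _ = δ := one_mul δ
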